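/- (Exact linear regression equation of Proposition 1.) Let α > 0, let Ω, v : ℝ → EuclideanSpace ℝ (Fin 3) be continuous, and let z : ℝ → EuclideanSpace ℝ (Fin 3) be differentiable with z(t) ≠ 0 and z'(t) = −Ω(t) ×₃ z(t) − v(t) for all t ≥ 0. Set y(t) := ‖z(t)‖⁻¹ • z(t) and r(t) := ‖z(t)‖. Suppose x̄, p₂, q : ℝ → EuclideanSpace ℝ (Fin 3) are differentiable and satisfy for all t ≥ 0: x̄'(t) = −α x̄(t) + α² • y(t) with x̄(0) = α • y(0); p₂'(t) = −α p₂(t) + α • (Ω(t) ×₃ y(t)) with p₂(0) = 0; and, with φ(t) := α • y(t) − x̄(t) + p₂(t), q'(t) = −α q(t) + ⟪y(t), v(t)⟫ • φ(t) + α • (v(t) − ⟪y(t), v(t)⟫ • y(t)) with q(0) = 0. Then r(t) • φ(t) + q(t) = 0 for all t ≥ 0. -/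

import Mathlib

open scoped RealInnerProductSpace

/-- Cross product on `EuclideanSpace ℝ (Fin 3)`, transported from Mathlib's
`crossProduct` on `Fin 3 → ℝ`. -/
noncomputable def cross3 (a b : EuclideanSpace ℝ (Fin 3)) : EuclideanSpace ℝ (Fin 3) :=
  (WithLp.equiv 2 (Fin 3 → ℝ)).symm
    (crossProduct ((WithLp.equiv 2 (Fin 3 → ℝ)) a) ((WithLp.equiv 2 (Fin 3 → ℝ)) b))

lemma inner_cross3_self (a b : EuclideanSpace ℝ (Fin 3)) : ⟪a, cross3 b a⟫ = 0 := by
  have h := dot_cross_self ((WithLp.equiv 2 (Fin 3 → ℝ)) b) ((WithLp.equiv 2 (Fin 3 → ℝ)) a)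
  simp only [dotProduct] at h
  simp only [cross3, PiLp.inner_apply, RCLike.inner_apply, conj_trivial]
  simpa [mul_comm] using h

lemma cross3_smul_right (s : ℝ) (a b : EuclideanSpace ℝ (Fin 3)) :
    cross3 a (s • b) = s • cross3 a b := by
  simp [cross3]

/-- Exact (transient-free) linear regression equation of Proposition 1:
`r(t) • φ(t) + q(t) = 0` for all `t ≥ 0`. -/
theorem stmt4 (α : ℝ) (hα : 0 < α)
    (Ω v : ℝ → EuclideanSpace ℝ (Fin 3)) (hΩ : Continuous Ω) (hv : Continuous v)
    (z : ℝ → EuclideanSpace ℝ (Fin 3))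
    (hz : Differentiable ℝ z)
    (hz0 : ∀ t ≥ (0:ℝ), z t ≠ 0)
    (hzd : ∀ t ≥ (0:ℝ), deriv z t = -cross3 (Ω t) (z t) - v t)
    (y : ℝ → EuclideanSpace ℝ (Fin 3)) (hy : y = fun t => ‖z t‖⁻¹ • z t)
    (r : ℝ → ℝ) (hr : r = fun t => ‖z t‖)
    (xb p₂ q : ℝ → EuclideanSpace ℝ (Fin 3))
    (hxb : Differentiable ℝ xb)
    (hxbd : ∀ t ≥ (0:ℝ), deriv xb t = (-α) • xb t + (α ^ 2) • y t)
    (hxb0 : xb 0 = α • y 0)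
    (hp₂ : Differentiable ℝ p₂)
    (hp₂d : ∀ t ≥ (0:ℝ), deriv p₂ t = (-α) • p₂ t + α • cross3 (Ω t) (y t))
    (hp₂0 : p₂ 0 = 0)
    (φ : ℝ → EuclideanSpace ℝ (Fin 3)) (hφ : φ = fun t => α • y t - xb t + p₂ t)
    (hq : Differentiable ℝ q)
    (hqd : ∀ t ≥ (0:ℝ), deriv q t =
      (-α) • q t + ⟪y t, v t⟫ • φ t + α • (v t - ⟪y t, v t⟫ • y t))
    (hq0 : q 0 = 0) :
    ∀ t ≥ (0:ℝ), r t • φ t + q t = 0 := by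
  have hry : ∀ s, r s • y s = z s := by
    intro s
    rw [hr, hy]
    by_cases h : z s = 0
    · simp [h]
    · rw [smul_smul, mul_inv_cancel₀ (norm_ne_zero_iff.mpr h), one_smul]
  set F : ℝ → EuclideanSpace ℝ (Fin 3) := fun s => r s • φ s + q s with hF
  have hF0 : F 0 = 0 := by
    simp [hF, hφ, hxb0, hp₂0, hq0]
  have hFd : ∀ s, 0 ≤ s → HasDerivAt F (-α • F s) s := by
    intro s hs
    have hzs : z s ≠ 0 := hz0 s hs
    have hns : ‖z s‖ ≠ 0 := norm_ne_zero_iff.mpr hzs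
    have hzz : ⟪z s, z s⟫ ≠ 0 := by
      rw [real_inner_self_eq_norm_mul_norm]
      positivity
    -- derivative of r
    have hinner : HasDerivAt (fun u => ⟪z u, z u⟫)
        (⟪z s, deriv z s⟫ + ⟪deriv z s, z s⟫) s :=
      (hz s).hasDerivAt.inner ℝ (hz s).hasDerivAt
    have hsqrt := (Real.hasDerivAt_sqrt hzz).comp s hinner
    have hρ : HasDerivAt r (-⟪y s, v s⟫) s := by
      have heq : r = fun u => Real.sqrt ⟪z u, z u⟫ := by
        funext u
        rw [hr, real_inner_self_eq_norm_mul_norm, Real.sqrt_mul_self (norm_nonneg _)]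
      rw [heq]
      refine hsqrt.congr_deriv (Eq.symm ?_)
      have h1 : Real.sqrt ⟪z s, z s⟫ = ‖z s‖ := by
        rw [real_inner_self_eq_norm_mul_norm, Real.sqrt_mul_self (norm_nonneg _)]
      have h2 : ⟪deriv z s, z s⟫ = ⟪z s, deriv z s⟫ := real_inner_comm _ _
      have h3 : ⟪z s, deriv z s⟫ = -⟪z s, v s⟫ := by
        rw [hzd s hs, inner_sub_right, inner_neg_right, inner_cross3_self]
        ring
      have h4 : ⟪y s, v s⟫ = ‖z s‖⁻¹ * ⟪z s, v s⟫ := by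
        rw [hy, real_inner_smul_left]
      rw [h1, h2, h3, h4]
      field_simp
      ring
    have hFeq : F = fun u => α • z u - r u • xb u + r u • p₂ u + q u := by
      funext u
      simp only [hF, hφ]
      rw [smul_add, smul_sub, smul_comm (r u) α, hry u]
    have hX : r s • cross3 (Ω s) (y s) = cross3 (Ω s) (z s) := by
      rw [← cross3_smul_right, hry]
    have hd : HasDerivAt F
        (α • deriv z s - (r s • deriv xb s + (-⟪y s, v s⟫) • xb s)
          + (r s • deriv p₂ s + (-⟪y s, v s⟫) • p₂ s) + deriv q s) s := by
      rw [hFeq]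
      exact ((((hz s).hasDerivAt.const_smul α).sub (hρ.smul (hxb s).hasDerivAt)).add
        (hρ.smul (hp₂ s).hasDerivAt)).add (hq s).hasDerivAt
    convert hd using 1
    rw [hzd s hs, hxbd s hs, hp₂d s hs, hqd s hs, hF, hφ]
    linear_combination (norm := module) (-α : ℝ) • hX
  -- exponential trick
  set g : ℝ → EuclideanSpace ℝ (Fin 3) := fun s => Real.exp (α * s) • F s with hg
  have hgd : ∀ s, 0 ≤ s → HasDerivAt g 0 s := by
    intro s hs
    have h1 : HasDerivAt (fun u => Real.exp (α * u)) (Real.exp (α * s) * α) s := by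
      exact ((Real.hasDerivAt_exp (α * s)).comp s ((hasDerivAt_id s).const_mul α)).congr_deriv (by ring)
    have h2 := h1.smul (hFd s hs)
    refine h2.congr_deriv ?_
    match_scalars <;> ring
  intro t₀ ht₀
  have hcont : ContinuousOn g (Set.Icc 0 t₀) := fun x hx =>
    (hgd x hx.1).continuousAt.continuousWithinAt
  have hconst := constant_of_has_deriv_right_zero hcont
    (fun x hx => (hgd x hx.1).hasDerivWithinAt)
  have hgt : g t₀ = g 0 := hconst t₀ ⟨ht₀, le_refl _⟩
  have : Real.exp (α * t₀) • F t₀ = 0 := by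
    have h0 : g 0 = 0 := by rw [hg]; simp [hF0]
    have ht : g t₀ = 0 := hgt.trans h0
    rw [hg] at ht
    simpa using ht
  have hF₀ : F t₀ = 0 := by
    rcases smul_eq_zero.mp this with h | h
    · exact absurd h (Real.exp_ne_zero _)
    · exact h
  simpa [hF] using hF₀
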